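/- arXiv:2410.22959 — 2 statements merged into one kernel-verified Lean document; each statement's English description precedes it below -/
import Mathlib

section
/- Let d be a natural number, μ : Fin d → ℝ, and σ : Fin d → ℝ≥0. The product measure ∏_{i} gaussianReal (μ i) (σ i) on the function space (Fin d → ℝ), transported to EuclideanSpace ℝ (Fin d) via the canonical measurable equivalence, equals the multivariate Gaussian distribution with mean vector μ and diagonal covariance matrix diag(σ). In other words, a vector of independent univariate Gaussian random variables with means μ_i and variances σ_i is jointly distributed as a multivariate Gaussian with mean μ and covariance matrix whose diagonal entries are σ_i and off-diagonal entries are 0. -/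
open MeasureTheory ProbabilityTheory
open scoped NNReal

/-- The standard Gaussian measure on `Fin d → ℝ`: the product of `d` independent
standard univariate Gaussians. -/
noncomputable def stdGaussianPi (d : ℕ) : Measure (Fin d → ℝ) :=
  Measure.pi fun _ => gaussianReal 0 1

open scoped ComplexOrder in
noncomputable def Matrix.PosSemidef.sqrt {n 𝕜 : Type*} [Fintype n] [DecidableEq n] [RCLike 𝕜]
    {A : Matrix n n 𝕜} (hA : A.PosSemidef) : Matrix n n 𝕜 :=
  hA.1.eigenvectorUnitary.1 * Matrix.diagonal ((↑) ∘ Real.sqrt ∘ hA.1.eigenvalues) *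
    (star hA.1.eigenvectorUnitary : Matrix n n 𝕜)

/-- The multivariate Gaussian distribution `N(μ, Σ)` on `EuclideanSpace ℝ (Fin d)` with mean
vector `μ` and positive semidefinite covariance matrix `Σ`: the pushforward of the standard
Gaussian under the affine map `x ↦ μ + √Σ x`, where `√Σ` is the positive semidefinite
square root of `Σ`. -/
noncomputable def multivariateGaussian {d : ℕ} (μ : EuclideanSpace ℝ (Fin d))
    {S : Matrix (Fin d) (Fin d) ℝ} (hS : S.PosSemidef) :
    Measure (EuclideanSpace ℝ (Fin d)) :=
  Measure.map
    (fun x => μ + (MeasurableEquiv.toLp 2 (Fin d → ℝ)) (hS.sqrt.mulVec x))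
    (stdGaussianPi d)

/-- A vector of independent univariate Gaussian random variables with means `μ i` and
variances `σ i` is jointly multivariate Gaussian with mean vector `μ` and diagonal
covariance matrix `diag σ`: the product measure `∏ i, gaussianReal (μ i) (σ i)` on
`Fin d → ℝ`, transported to `EuclideanSpace ℝ (Fin d)` along the canonical measurable
equivalence, equals `N(μ, Matrix.diagonal σ)`. -/
theorem pi_gaussianReal_eq_multivariateGaussian_diagonal (d : ℕ)
    (μ : Fin d → ℝ) (σ : Fin d → ℝ≥0) :
    Measure.map (MeasurableEquiv.toLp 2 (Fin d → ℝ))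
        (Measure.pi fun i => gaussianReal (μ i) (σ i)) =
      multivariateGaussian ((MeasurableEquiv.toLp 2 (Fin d → ℝ)) μ)
        (Matrix.posSemidef_diagonal_iff.mpr fun i => (σ i).coe_nonneg :
          (Matrix.diagonal fun i => (σ i : ℝ)).PosSemidef) := by
  have hσ : ∀ i, (0:ℝ) ≤ (σ i : ℝ) := fun i => (σ i).coe_nonneg
  set hS : (Matrix.diagonal fun i => (σ i : ℝ)).PosSemidef :=
    Matrix.posSemidef_diagonal_iff.mpr fun i => (σ i).coe_nonneg
  -- square root of the diagonal matrix
  have hsq : Matrix.PosSemidef (Matrix.diagonal fun i => Real.sqrt (σ i)) :=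
    Matrix.posSemidef_diagonal_iff.mpr fun i => Real.sqrt_nonneg _
  have hsqrt : hS.sqrt = Matrix.diagonal fun i => Real.sqrt (σ i) := by
    open scoped MatrixOrder in
    have h1 : hS.sqrt = CFC.sqrt (Matrix.diagonal fun i => (σ i : ℝ)) := by
      rw [CFC.sqrt_eq_real_sqrt _ hS.nonneg, cfcₙ_eq_cfc (hf0 := Real.sqrt_zero), hS.1.cfc_eq]
      simp [Matrix.PosSemidef.sqrt, Matrix.IsHermitian.cfc]
    open scoped MatrixOrder in
    rw [h1, CFC.sqrt_eq_iff _ _ hS.nonneg hsq.nonneg, Matrix.diagonal_mul_diagonal]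
    congr 1
    funext i
    exact Real.mul_self_sqrt (hσ i)
  -- each coordinate map is measure preserving
  have hmp : MeasurePreserving (fun (a : Fin d → ℝ) i => μ i + Real.sqrt (σ i) * a i)
      (stdGaussianPi d) (Measure.pi fun i => gaussianReal (μ i) (σ i)) := by
    refine measurePreserving_pi _ _ fun i => ⟨(measurable_const_mul _).const_add _, ?_⟩
    have h1 : (gaussianReal 0 1).map (fun x => Real.sqrt (σ i) * x)
        = gaussianReal 0 (σ i) := by
      rw [gaussianReal_map_const_mul]
      congr 1
      · ring
      · ext
        simp [Real.sq_sqrt (hσ i)]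
    have h2 : (gaussianReal 0 (σ i)).map (fun x => μ i + x)
        = gaussianReal (μ i) (σ i) := by
      rw [gaussianReal_map_const_add]
      simp
    calc (gaussianReal 0 1).map (fun x => μ i + Real.sqrt (σ i) * x)
        = ((gaussianReal 0 1).map (fun x => Real.sqrt (σ i) * x)).map
            (fun x => μ i + x) := by
          rw [Measure.map_map (measurable_const_add _) (measurable_const_mul _)]
          rfl
      _ = gaussianReal (μ i) (σ i) := by rw [h1, h2]
  rw [_root_.multivariateGaussian, hsqrt]
  have hfun : (fun x : Fin d → ℝ =>
        (MeasurableEquiv.toLp 2 (Fin d → ℝ)) μ +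
          (MeasurableEquiv.toLp 2 (Fin d → ℝ))
            ((Matrix.diagonal fun i => Real.sqrt (σ i)).mulVec x))
      = (MeasurableEquiv.toLp 2 (Fin d → ℝ)) ∘
          (fun (a : Fin d → ℝ) i => μ i + Real.sqrt (σ i) * a i) := by
    funext x
    ext i
    simp [Matrix.mulVec_diagonal]
  rw [hfun, ← Measure.map_map (MeasurableEquiv.measurable _) hmp.measurable, hmp.map_eq]
end

section
/- Let Z be a nonempty finite type (the latent variable values) and let p, p' : Z → ℝ be two nonnegative functions (the complete-data likelihoods z ↦ P(y, z | θ) and z ↦ P(y, z | θ') at two parameter values) with marginal likelihoods L = ∑_{z} p z and L' = ∑_{z} p' z. Assume p z > 0 and p' z > 0 for all z, and define the responsibilities r z = p z / L. If the M-step condition ∑_{z} r z * Real.log (p' z) ≥ ∑_{z} r z * Real.log (p z) holds, then Real.log L' ≥ Real.log L. In words: any parameter update that does not decrease the expected complete-data log-likelihood under the current posterior responsibilities does not decrease the marginal log-likelihood, so the EM iteration with known mean prior produces a monotonically non-decreasing log-likelihood sequence. -/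
/-- Monotonicity of the EM iteration: let `Z` be a nonempty finite type of latent values,
`p z = P(y, z | θ)` and `p' z = P(y, z | θ')` strictly positive complete-data likelihoods
with marginals `L = ∑ z, p z` and `L' = ∑ z, p' z`, and responsibilities `r z = p z / L`.
If the M-step condition `∑ z, r z * log (p' z) ≥ ∑ z, r z * log (p z)` holds, then
`log L' ≥ log L`. -/
theorem em_loglikelihood_monotone (Z : Type*) [Fintype Z] [Nonempty Z]
    (p p' : Z → ℝ) (hp : ∀ z, 0 < p z) (hp' : ∀ z, 0 < p' z)
    (L L' : ℝ) (hL : L = ∑ z, p z) (hL' : L' = ∑ z, p' z)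
    (r : Z → ℝ) (hr : ∀ z, r z = p z / L)
    (hMstep : ∑ z, r z * Real.log (p z) ≤ ∑ z, r z * Real.log (p' z)) :
    Real.log L ≤ Real.log L' := by
  have hLpos : 0 < L := hL ▸ Finset.sum_pos (fun z _ => hp z) Finset.univ_nonempty
  have hL'pos : 0 < L' := hL' ▸ Finset.sum_pos (fun z _ => hp' z) Finset.univ_nonempty
  have hrpos : ∀ z, 0 < r z := fun z => (hr z) ▸ div_pos (hp z) hLpos
  have hsum_r : ∑ z, r z = 1 := by
    simp only [hr, ← Finset.sum_div, ← hL]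
    exact div_self hLpos.ne'
  -- Gibbs / KL ≥ 0 step: ∑ r log(p'/L') ≤ ∑ r log r
  have key : ∑ z, r z * Real.log (p' z / L') ≤ ∑ z, r z * Real.log (r z) := by
    have h1 : ∀ z : Z, r z * Real.log (p' z / L') - r z * Real.log (r z)
        ≤ p' z / L' - r z := by
      intro z
      have hq : 0 < p' z / L' / r z := div_pos (div_pos (hp' z) hL'pos) (hrpos z)
      have := Real.log_le_sub_one_of_pos hq
      have hlog : Real.log (p' z / L' / r z)
          = Real.log (p' z / L') - Real.log (r z) :=
        Real.log_div (div_pos (hp' z) hL'pos).ne' (hrpos z).ne'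
      rw [hlog] at this
      have h2 := mul_le_mul_of_nonneg_left this (hrpos z).le
      calc r z * Real.log (p' z / L') - r z * Real.log (r z)
          = r z * (Real.log (p' z / L') - Real.log (r z)) := by ring
        _ ≤ r z * (p' z / L' / r z - 1) := h2
        _ = p' z / L' - r z := by field_simp [(hrpos z).ne']
    have h3 : ∑ z, (r z * Real.log (p' z / L') - r z * Real.log (r z))
        ≤ ∑ z, (p' z / L' - r z) := Finset.sum_le_sum fun z _ => h1 z
    have h4 : ∑ z : Z, (p' z / L' - r z) = 0 := by
      rw [Finset.sum_sub_distrib, hsum_r, ← Finset.sum_div, ← hL',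
        div_self hL'pos.ne']
      ring
    rw [Finset.sum_sub_distrib, h4] at h3
    linarith
  have expandL : Real.log L = ∑ z, r z * Real.log (p z)
      - ∑ z, r z * Real.log (r z) := by
    rw [← Finset.sum_sub_distrib]
    have : ∀ z : Z, r z * Real.log (p z) - r z * Real.log (r z)
        = r z * Real.log L := by
      intro z
      rw [hr z, Real.log_div (hp z).ne' hLpos.ne']
      ring
    rw [Finset.sum_congr rfl fun z _ => this z, ← Finset.sum_mul, hsum_r, one_mul]
  have expandL' : Real.log L' = ∑ z, r z * Real.log (p' z)
      - ∑ z, r z * Real.log (p' z / L') := by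
    rw [← Finset.sum_sub_distrib]
    have : ∀ z : Z, r z * Real.log (p' z) - r z * Real.log (p' z / L')
        = r z * Real.log L' := by
      intro z
      rw [Real.log_div (hp' z).ne' hL'pos.ne']
      ring
    rw [Finset.sum_congr rfl fun z _ => this z, ← Finset.sum_mul, hsum_r, one_mul]
  rw [expandL, expandL']
  linarith
end
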